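/- Let x and θ be positive real numbers and θ = p/q with p, q positive coprime integers. Then ∑_{1 ≤ m ≤ x} ⌊mθ⌋ + ∑_{1 ≤ n ≤ θx} ⌊n/θ⌋ = ⌊x⌋ · ⌊θx⌋ + ⌊x/q⌋. -/

import Mathlib

lemma count_dvd_Icc (M q : ℕ) :
    ((Finset.Icc 1 M).filter (fun (m : ℕ) => q ∣ m)).card = M / q := by
  rw [← Nat.card_multiples M q]
  apply Finset.card_bij (fun m _ => m - 1)
  · intro m hm
    simp only [Finset.mem_filter, Finset.mem_Icc] at hm
    simp only [Finset.mem_filter, Finset.mem_range]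
    obtain ⟨⟨h1, h2⟩, h3⟩ := hm
    refine ⟨by omega, ?_⟩
    have : m - 1 + 1 = m := by omega
    rw [this]; exact h3
  · intro a ha b hb hab
    simp only [Finset.mem_filter, Finset.mem_Icc] at ha hb
    omega
  · intro e he
    simp only [Finset.mem_filter, Finset.mem_range] at he
    exact ⟨e + 1, by simp only [Finset.mem_filter, Finset.mem_Icc]; exact ⟨⟨by omega, by omega⟩, he.2⟩, by omega⟩

theorem sylvester_rational (x : ℝ) (hx : 0 < x) (p q : ℕ) (hp : 0 < p) (hq : 0 < q)
    (hcop : Nat.Coprime p q) (θ : ℝ) (hθ : θ = (p : ℝ) / q) :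
    ∑ m ∈ Finset.Icc 1 ⌊x⌋₊, ⌊(m : ℝ) * θ⌋ + ∑ n ∈ Finset.Icc 1 ⌊θ * x⌋₊, ⌊(n : ℝ) / θ⌋ =
      ⌊x⌋ * ⌊θ * x⌋ + ⌊x / q⌋ := by
  have hq0 : (0:ℝ) < q := by exact_mod_cast hq
  have hp0 : (0:ℝ) < p := by exact_mod_cast hp
  have hθ0 : 0 < θ := by rw [hθ]; positivity
  set M := ⌊x⌋₊ with hM
  set N := ⌊θ * x⌋₊ with hN
  have hMx : (M:ℝ) ≤ x := Nat.floor_le hx.le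
  have hNx : (N:ℝ) ≤ θ * x := Nat.floor_le (by positivity)
  have key1 : ∀ m ∈ Finset.Icc 1 M, ⌊(m:ℝ) * θ⌋ =
      (((Finset.Icc 1 N).filter (fun (n : ℕ) => (n:ℝ) ≤ (m:ℝ) * θ)).card : ℤ) := by
    intro m hm
    obtain ⟨hm1, hmM⟩ := Finset.mem_Icc.mp hm
    have hmθ : (0:ℝ) ≤ (m:ℝ) * θ := by positivity
    have hmx : (m:ℝ) ≤ x := le_trans (by exact_mod_cast hmM) hMx
    have hfl : ⌊(m:ℝ)*θ⌋₊ ≤ N := by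
      apply Nat.floor_le_floor
      nlinarith
    have hset : (Finset.Icc 1 N).filter (fun (n : ℕ) => (n:ℝ) ≤ (m:ℝ) * θ)
        = Finset.Icc 1 ⌊(m:ℝ)*θ⌋₊ := by
      ext n
      simp only [Finset.mem_filter, Finset.mem_Icc]
      constructor
      · rintro ⟨⟨h1, _⟩, h3⟩
        exact ⟨h1, Nat.le_floor h3⟩
      · rintro ⟨h1, h2⟩
        exact ⟨⟨h1, h2.trans hfl⟩, (Nat.le_floor_iff hmθ).mp h2⟩
    rw [hset, Nat.card_Icc, ← Int.natCast_floor_eq_floor hmθ]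
    omega
  have key2 : ∀ n ∈ Finset.Icc 1 N, ⌊(n:ℝ) / θ⌋ =
      (((Finset.Icc 1 M).filter (fun (m : ℕ) => (m:ℝ) * θ ≤ (n:ℝ))).card : ℤ) := by
    intro n hn
    obtain ⟨hn1, hnN⟩ := Finset.mem_Icc.mp hn
    have hnθ : (0:ℝ) ≤ (n:ℝ) / θ := by positivity
    have hnx : (n:ℝ) ≤ θ * x := le_trans (by exact_mod_cast hnN) hNx
    have hfl : ⌊(n:ℝ)/θ⌋₊ ≤ M := by
      apply Nat.floor_le_floor
      rw [div_le_iff₀ hθ0]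
      nlinarith
    have hset : (Finset.Icc 1 M).filter (fun (m : ℕ) => (m:ℝ) * θ ≤ (n:ℝ))
        = Finset.Icc 1 ⌊(n:ℝ)/θ⌋₊ := by
      ext m
      simp only [Finset.mem_filter, Finset.mem_Icc]
      have hiff : ((m:ℝ) * θ ≤ (n:ℝ)) ↔ ((m:ℝ) ≤ (n:ℝ)/θ) := by
        rw [le_div_iff₀ hθ0]
      constructor
      · rintro ⟨⟨h1, _⟩, h3⟩
        exact ⟨h1, Nat.le_floor (hiff.mp h3)⟩
      · rintro ⟨h1, h2⟩
        exact ⟨⟨h1, h2.trans hfl⟩, hiff.mpr ((Nat.le_floor_iff hnθ).mp h2)⟩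
    rw [hset, Nat.card_Icc, ← Int.natCast_floor_eq_floor hnθ]
    omega
  rw [Finset.sum_congr rfl key1, Finset.sum_congr rfl key2]
  have swap : ∑ n ∈ Finset.Icc 1 N,
      (((Finset.Icc 1 M).filter (fun (m : ℕ) => (m:ℝ) * θ ≤ (n:ℝ))).card : ℤ)
      = ∑ m ∈ Finset.Icc 1 M,
      (((Finset.Icc 1 N).filter (fun (n : ℕ) => (m:ℝ) * θ ≤ (n:ℝ))).card : ℤ) := by
    simp only [Finset.card_filter]
    push_cast
    rw [Finset.sum_comm]
  rw [swap, ← Finset.sum_add_distrib]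
  have permn : ∀ m ∈ Finset.Icc 1 M,
      (((Finset.Icc 1 N).filter (fun (n : ℕ) => (n:ℝ) ≤ (m:ℝ) * θ)).card : ℤ)
      + (((Finset.Icc 1 N).filter (fun (n : ℕ) => (m:ℝ) * θ ≤ (n:ℝ))).card : ℤ)
      = (N:ℤ) + (if q ∣ m then 1 else 0) := by
    intro m hm
    obtain ⟨hm1, hmM⟩ := Finset.mem_Icc.mp hm
    have hmx : (m:ℝ) ≤ x := le_trans (by exact_mod_cast hmM) hMx
    have hunion : ((Finset.Icc 1 N).filter (fun (n : ℕ) => (n:ℝ) ≤ (m:ℝ) * θ))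
        ∪ ((Finset.Icc 1 N).filter (fun (n : ℕ) => (m:ℝ) * θ ≤ (n:ℝ))) = Finset.Icc 1 N := by
      rw [← Finset.filter_or]
      apply Finset.filter_true_of_mem
      intro n _
      exact le_total (n:ℝ) ((m:ℝ)*θ)
    have hinter : ((Finset.Icc 1 N).filter (fun (n : ℕ) => (n:ℝ) ≤ (m:ℝ) * θ))
        ∩ ((Finset.Icc 1 N).filter (fun (n : ℕ) => (m:ℝ) * θ ≤ (n:ℝ)))
        = (Finset.Icc 1 N).filter (fun (n : ℕ) => (n:ℝ) = (m:ℝ) * θ) := by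
      rw [← Finset.filter_and]
      apply Finset.filter_congr
      intro n _
      constructor
      · rintro ⟨h1, h2⟩; exact le_antisymm h1 h2
      · rintro h; exact ⟨le_of_eq h, ge_of_eq h⟩
    have hcards := Finset.card_union_add_card_inter
      ((Finset.Icc 1 N).filter (fun (n : ℕ) => (n:ℝ) ≤ (m:ℝ) * θ))
      ((Finset.Icc 1 N).filter (fun (n : ℕ) => (m:ℝ) * θ ≤ (n:ℝ)))
    rw [hunion, hinter, Nat.card_Icc] at hcards
    have heqcard : ((Finset.Icc 1 N).filter (fun (n : ℕ) => (n:ℝ) = (m:ℝ) * θ)).card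
        = if q ∣ m then 1 else 0 := by
      by_cases hdvd : q ∣ m
      · obtain ⟨k, rfl⟩ := hdvd
        have hk1 : 1 ≤ k := by
          rcases Nat.eq_zero_or_pos k with h | h
          · subst h; simp at hm1
          · exact h
        have hval : ((q*k:ℕ):ℝ) * θ = ((p*k:ℕ):ℝ) := by
          rw [hθ]; push_cast; field_simp
        have hmem : p * k ∈ Finset.Icc 1 N := by
          refine Finset.mem_Icc.mpr ⟨Nat.mul_pos hp hk1, Nat.le_floor ?_⟩
          rw [← hval]
          nlinarith [hmx, hθ0]
        rw [if_pos ⟨k, rfl⟩]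
        have hone : (Finset.Icc 1 N).filter (fun (n : ℕ) => (n:ℝ) = ((q*k:ℕ):ℝ) * θ) = {p * k} := by
          ext n
          simp only [Finset.mem_filter, Finset.mem_singleton]
          constructor
          · rintro ⟨_, h2⟩
            rw [hval] at h2
            exact_mod_cast h2
          · rintro rfl
            exact ⟨hmem, hval.symm⟩
        rw [hone, Finset.card_singleton]
      · rw [if_neg hdvd]
        rw [Finset.card_eq_zero, Finset.filter_eq_empty_iff]
        intro n _ hcon
        have hr : (n:ℝ) * q = (m:ℝ) * p := by
          rw [hcon, hθ]; field_simp
        have hnq : n * q = m * p := by exact_mod_cast hr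
        have hdq : q ∣ m * p := ⟨n, by rw [← hnq]; ring⟩
        exact hdvd (hcop.symm.dvd_of_dvd_mul_right hdq)
    rw [heqcard] at hcards
    split_ifs at hcards ⊢ <;> omega
  rw [Finset.sum_congr rfl permn, Finset.sum_add_distrib, Finset.sum_const, Nat.card_Icc]
  have hsumite : ∑ m ∈ Finset.Icc 1 M, (if q ∣ m then (1:ℤ) else 0)
      = ((M / q : ℕ) : ℤ) := by
    rw [Finset.sum_boole, count_dvd_Icc]
  rw [hsumite]
  have h1 : ⌊x⌋ = (M:ℤ) := (Int.natCast_floor_eq_floor hx.le).symm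
  have h2 : ⌊θ*x⌋ = (N:ℤ) := (Int.natCast_floor_eq_floor (by positivity)).symm
  have h3 : ⌊x/(q:ℝ)⌋ = ((M/q : ℕ):ℤ) := by
    rw [← Int.natCast_floor_eq_floor (by positivity), Nat.floor_div_natCast]
  rw [h1, h2, h3, nsmul_eq_mul]
  push_cast
  ring
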